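/- arXiv:2008.12239 — 2 statements merged into one kernel-verified Lean document; each statement's English description precedes it below -/
import Mathlib

section
/- Let R be a commutative ring, m ≥ 2, and M an m×m matrix over R. Let A = adj(M) denote the adjugate of M, so that M·A = A·M = det(M)·I. Then for all row indices i < k and column indices j < l in {1, …, m}, the 2×2 minor of the adjugate satisfies A_{ij}·A_{kl} − A_{il}·A_{kj} = (−1)^{i+j+k+l} · det(M) · det(M(ĵ,l̂ | î,k̂)), where M(ĵ,l̂ | î,k̂) is the (m−2)×(m−2) matrix obtained from M by deleting rows j and l and columns i and k (keeping the remaining rows and columns in their natural order), and the determinant of the empty (0×0) matrix is 1. (This is the Jacobi theorem on minors of the adjugate matrix used in the proof of Lemma 4.1.) -/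
set_option linter.deprecated false

open Matrix

section JacobiHelpers

variable {R : Type*} [CommRing R]

private lemma my_updateColumn_comm {n : Type*} [DecidableEq n] {α : Type*} (M : Matrix n n α)
    {i k : n} (h : i ≠ k) (u w : n → α) :
    (M.updateCol i u).updateCol k w = (M.updateCol k w).updateCol i u := by
  ext x y
  rcases eq_or_ne y k with rfl | hyk
  · rw [Matrix.updateCol_self, Matrix.updateCol_ne h.symm, Matrix.updateCol_self]
  · rcases eq_or_ne y i with rfl | hyi
    · rw [Matrix.updateCol_ne hyk, Matrix.updateCol_self, Matrix.updateCol_self]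
    · rw [Matrix.updateCol_ne hyk, Matrix.updateCol_ne hyi, Matrix.updateCol_ne hyi,
        Matrix.updateCol_ne hyk]

private lemma my_mul_updateColumn {n : Type*} [Fintype n] [DecidableEq n]
    (M N : Matrix n n R) (i : n) (v : n → R) :
    M * (N.updateCol i v) = (M * N).updateCol i (M *ᵥ v) := by
  ext x y
  rcases eq_or_ne y i with rfl | hy
  · simp [Matrix.mul_apply, Matrix.updateCol_self, Matrix.mulVec, dotProduct]
  · simp [Matrix.mul_apply, Matrix.updateCol_ne hy]

private lemma my_det_updateColumn_single {n : ℕ} (M : Matrix (Fin (n+1)) (Fin (n+1)) R)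
    (i j : Fin (n+1)) :
    (M.updateCol i (Pi.single j 1)).det
      = (-1 : R) ^ ((i : ℕ) + (j : ℕ)) * (M.submatrix j.succAbove i.succAbove).det := by
  rw [Matrix.det_succ_column _ i, Finset.sum_eq_single j]
  · rw [Matrix.updateCol_self, Pi.single_eq_same,
      Matrix.submatrix_updateCol_succAbove, mul_one, add_comm (j : ℕ)]
  · intro x _ hx
    rw [Matrix.updateCol_self, Pi.single_eq_of_ne hx, mul_zero, zero_mul]
  · intro h
    exact absurd (Finset.mem_univ j) h

private lemma my_submatrix_updateColumn_keep {m n m' n' : Type*} [DecidableEq n] [DecidableEq n']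
    {α : Type*} (M : Matrix m n α) (f : m' → m) (g : n' → n) (hg : Function.Injective g)
    (i' : n') (v : m → α) :
    (M.updateCol (g i') v).submatrix f g = (M.submatrix f g).updateCol i' (v ∘ f) := by
  ext x y
  rcases eq_or_ne y i' with rfl | hy
  · simp [Matrix.updateCol_self]
  · rw [Matrix.submatrix_apply, Matrix.updateCol_ne (fun h => hy (hg h)),
      Matrix.updateCol_ne hy, Matrix.submatrix_apply]

private lemma my_det_double_single {n : Type*} [Fintype n] [DecidableEq n]
    (i k s t : n) (hik : i ≠ k) :
    (((1 : Matrix n n R).updateCol i (Pi.single s 1)).updateCol k (Pi.single t 1)).det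
      = if s = i ∧ t = k then 1 else if s = k ∧ t = i then -1 else 0 := by
  set G := (((1 : Matrix n n R).updateCol i (Pi.single s 1)).updateCol k (Pi.single t 1))
    with hG
  have col_i : ∀ x, G x i = (Pi.single s 1 : n → R) x := fun x => by
    simp [hG, Matrix.updateCol_ne hik]
  have col_k : ∀ x, G x k = (Pi.single t 1 : n → R) x := fun x => by
    simp [hG]
  have col_other : ∀ x y, y ≠ i → y ≠ k → G x y = (1 : Matrix n n R) x y := fun x y h1 h2 => by
    simp [hG, Matrix.updateCol_ne h1, Matrix.updateCol_ne h2]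
  by_cases h1 : s = i ∧ t = k
  · obtain ⟨rfl, rfl⟩ := h1
    rw [if_pos ⟨rfl, rfl⟩]
    have : G = 1 := by
      ext x y
      rcases eq_or_ne y s with rfl | hy1
      · rw [col_i, Pi.single_apply, Matrix.one_apply]
      · rcases eq_or_ne y t with rfl | hy2
        · rw [col_k, Pi.single_apply, Matrix.one_apply]
        · exact col_other x y hy1 hy2
    rw [this, Matrix.det_one]
  · rw [if_neg h1]
    by_cases h2 : s = k ∧ t = i
    · obtain ⟨rfl, rfl⟩ := h2
      rw [if_pos ⟨rfl, rfl⟩]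
      have : G = (1 : Matrix n n R).submatrix id (Equiv.swap t s) := by
        ext x y
        rcases eq_or_ne y t with rfl | hy1
        · rw [col_i, Matrix.submatrix_apply, id_eq, Equiv.swap_apply_left, Pi.single_apply,
            Matrix.one_apply]
        · rcases eq_or_ne y s with rfl | hy2
          · rw [col_k, Matrix.submatrix_apply, id_eq, Equiv.swap_apply_right, Pi.single_apply,
              Matrix.one_apply]
          · rw [col_other x y hy1 hy2, Matrix.submatrix_apply, id_eq,
              Equiv.swap_apply_of_ne_of_ne hy1 hy2]
      rw [this, Matrix.det_permute', Equiv.Perm.sign_swap hik, Matrix.det_one]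
      simp
    · rw [if_neg h2]
      rcases eq_or_ne s t with rfl | hst
      · refine Matrix.det_zero_of_column_eq hik fun x => ?_
        rw [col_i, col_k]
      · by_cases hs : s ≠ i ∧ s ≠ k
        · refine Matrix.det_zero_of_column_eq (Ne.symm hs.1) fun x => ?_
          rw [col_other x s hs.1 hs.2, col_i, Matrix.one_apply, Pi.single_apply]
        · have ht : t ≠ i ∧ t ≠ k := by
            push_neg at hs h1 h2
            by_cases hsi : s = i
            · exact ⟨fun h => hst (hsi.trans h.symm), h1 hsi⟩
            · have hsk : s = k := hs hsi
              exact ⟨h2 hsk, fun h => hst (hsk.trans h.symm)⟩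
          refine Matrix.det_zero_of_column_eq (Ne.symm ht.2) fun x => ?_
          rw [col_other x t ht.1 ht.2, col_k, Matrix.one_apply, Pi.single_apply]

private lemma my_single_eq_smul {n : Type*} [DecidableEq n] (t : n) (a : R) :
    Pi.single t a = a • (Pi.single t 1 : n → R) := by
  funext x
  rcases eq_or_ne x t with rfl | hx
  · simp
  · simp [Pi.single_eq_of_ne hx]

private lemma my_det_updateColumn_expand {n : Type*} [Fintype n] [DecidableEq n]
    (X : Matrix n n R) (k : n) (w : n → R) :
    (X.updateCol k w).det = ∑ t, w t * (X.updateCol k (Pi.single t 1)).det := by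
  calc (X.updateCol k w).det = Matrix.cramer X w k := (Matrix.cramer_apply X w k).symm
    _ = Matrix.cramer X (∑ t, Pi.single t (w t)) k := by rw [Finset.univ_sum_single]
    _ = ∑ t, Matrix.cramer X (Pi.single t (w t)) k := by rw [map_sum, Finset.sum_apply]
    _ = ∑ t, w t * (X.updateCol k (Pi.single t 1)).det := by
        refine Finset.sum_congr rfl fun t _ => ?_
        rw [my_single_eq_smul t (w t), _root_.map_smul]
        simp [Matrix.cramer_apply]

private lemma my_det_one_two_updates {n : Type*} [Fintype n] [DecidableEq n]
    (i k : n) (hik : i ≠ k) (u w : n → R) :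
    (((1 : Matrix n n R).updateCol i u).updateCol k w).det
      = u i * w k - u k * w i := by
  rw [my_det_updateColumn_expand]
  have inner : ∀ t : n, (((1 : Matrix n n R).updateCol i u).updateCol k
      (Pi.single t 1)).det
      = ∑ s, u s * (if s = i ∧ t = k then (1:R) else if s = k ∧ t = i then -1 else 0) := by
    intro t
    rw [my_updateColumn_comm _ hik, my_det_updateColumn_expand]
    congr 1
    funext s
    rw [my_updateColumn_comm _ hik.symm, my_det_double_single i k s t hik]
  calc ∑ t, w t * (((1 : Matrix n n R).updateCol i u).updateCol k (Pi.single t 1)).det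
      = ∑ t, ∑ s, w t * (u s *
          (if s = i ∧ t = k then (1:R) else if s = k ∧ t = i then -1 else 0)) := by
        refine Finset.sum_congr rfl fun t _ => ?_
        rw [inner t, Finset.mul_sum]
    _ = u i * w k - u k * w i := by
        rw [Finset.sum_comm]
        rw [Finset.sum_eq_add_of_mem i k (Finset.mem_univ i) (Finset.mem_univ k) hik ?_]
        · rw [Finset.sum_eq_single k ?_ ?_, Finset.sum_eq_single i ?_ ?_]
          · simp [hik, Ne.symm hik]
            ring
          · intro t _ htk
            simp [htk, Ne.symm hik]
          · intro h; exact absurd (Finset.mem_univ i) h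
          · intro t _ hti
            simp [hti, hik]
          · intro h; exact absurd (Finset.mem_univ k) h
        · intro s _ hs
          refine Finset.sum_eq_zero fun t _ => ?_
          simp [hs.1, hs.2]

private lemma my_range_succAbove_comp {n : ℕ} (k : Fin (n+2)) (i₀ : Fin (n+1)) :
    Set.range (k.succAbove ∘ i₀.succAbove) = {x : Fin (n+2) | x ≠ k.succAbove i₀ ∧ x ≠ k} := by
  ext x
  constructor
  · rintro ⟨y, rfl⟩
    exact ⟨fun h => Fin.succAbove_ne i₀ y (Fin.succAbove_right_injective h),
      Fin.succAbove_ne k _⟩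
  · rintro ⟨h1, h2⟩
    obtain ⟨z, rfl⟩ := Fin.exists_succAbove_eq h2
    have hz : z ≠ i₀ := fun h => h1 (by rw [h])
    obtain ⟨y, rfl⟩ := Fin.exists_succAbove_eq hz
    exact ⟨y, rfl⟩

private lemma my_det_double_update {n : ℕ} (M : Matrix (Fin (n+2)) (Fin (n+2)) R)
    (i k j l : Fin (n+2)) (i₀ j₀ : Fin (n+1))
    (hki : k.succAbove i₀ = i) (hlj : l.succAbove j₀ = j)
    (hvi : (i₀ : ℕ) = (i : ℕ)) (hvj : (j₀ : ℕ) = (j : ℕ)) :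
    ((M.updateCol i (Pi.single j 1)).updateCol k (Pi.single l 1)).det
      = (-1 : R) ^ ((i : ℕ) + (j : ℕ) + (k : ℕ) + (l : ℕ)) *
        (M.submatrix (l.succAbove ∘ j₀.succAbove) (k.succAbove ∘ i₀.succAbove)).det := by
  rw [my_det_updateColumn_single (M.updateCol i (Pi.single j 1)) k l, ← hki,
    my_submatrix_updateColumn_keep M l.succAbove k.succAbove Fin.succAbove_right_injective i₀ _]
  have hcomp : (Pi.single j (1:R)) ∘ l.succAbove = (Pi.single j₀ 1 : Fin (n+1) → R) := by
    funext x
    rcases eq_or_ne x j₀ with rfl | hx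
    · rw [Function.comp_apply, hlj]; simp
    · have : l.succAbove x ≠ j := by
        rw [← hlj]; exact fun h => hx (Fin.succAbove_right_injective h)
      simp [Function.comp, Pi.single_eq_of_ne hx, Pi.single_eq_of_ne this]
  rw [hcomp, my_det_updateColumn_single, Matrix.submatrix_submatrix, ← mul_assoc, ← pow_add,
    hvi, hvj]
  congr 2
  omega

private lemma jacobi_aux {R : Type*} [CommRing R] {n : ℕ}
    (M : Matrix (Fin (n+2)) (Fin (n+2)) R)
    (i k j l : Fin (n+2)) (hik : i < k) (hjl : j < l)
    (r c : Fin n → Fin (n+2)) (hr : StrictMono r) (hc : StrictMono c)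
    (hrange : Set.range r = {x : Fin (n+2) | x ≠ j ∧ x ≠ l})
    (hcrange : Set.range c = {x : Fin (n+2) | x ≠ i ∧ x ≠ k}) :
    M.det * (M.adjugate i j * M.adjugate k l - M.adjugate i l * M.adjugate k j)
      = M.det * ((-1 : R) ^ ((i : ℕ) + (j : ℕ) + (k : ℕ) + (l : ℕ)) * M.det *
          (M.submatrix r c).det) := by
  have hik' : (i : ℕ) < (k : ℕ) := hik
  have hjl' : (j : ℕ) < (l : ℕ) := hjl
  have hkn : (k : ℕ) < n + 2 := k.isLt
  have hln : (l : ℕ) < n + 2 := l.isLt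
  set i₀ : Fin (n+1) := ⟨(i : ℕ), by omega⟩ with hi₀
  set j₀ : Fin (n+1) := ⟨(j : ℕ), by omega⟩ with hj₀
  have hki : k.succAbove i₀ = i := by
    rw [Fin.succAbove_of_castSucc_lt _ _ (by simp [Fin.lt_def, hik', hi₀])]
    exact Fin.ext (by simp [hi₀])
  have hlj : l.succAbove j₀ = j := by
    rw [Fin.succAbove_of_castSucc_lt _ _ (by simp [Fin.lt_def, hjl', hj₀])]
    exact Fin.ext (by simp [hj₀])
  have hc' : c = k.succAbove ∘ i₀.succAbove := by
    have key : Set.range c = Set.range (k.succAbove ∘ i₀.succAbove) := by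
      rw [hcrange, my_range_succAbove_comp, hki]
    exact (hc.range_inj ((Fin.strictMono_succAbove k).comp
      (Fin.strictMono_succAbove i₀))).mp key
  have hr' : r = l.succAbove ∘ j₀.succAbove := by
    have key : Set.range r = Set.range (l.succAbove ∘ j₀.succAbove) := by
      rw [hrange, my_range_succAbove_comp, hlj]
    exact (hr.range_inj ((Fin.strictMono_succAbove l).comp
      (Fin.strictMono_succAbove j₀))).mp key
  have hmv : ∀ jj : Fin (n+2), (M *ᵥ fun s => M.adjugate s jj)
      = M.det • (Pi.single jj 1 : Fin (n+2) → R) := by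
    intro jj
    funext x
    have h := congrFun (congrFun (Matrix.mul_adjugate M) x) jj
    simp only [Matrix.mul_apply, Matrix.smul_apply, Matrix.one_apply, smul_eq_mul] at h
    simp only [Matrix.mulVec, dotProduct, Pi.smul_apply, Pi.single_apply, smul_eq_mul]
    exact h
  set B := ((1 : Matrix (Fin (n+2)) (Fin (n+2)) R).updateCol i
      fun s => M.adjugate s j).updateCol k (fun s => M.adjugate s l) with hB
  have hMB : M * B = (M.updateCol i (M.det • (Pi.single j 1 : Fin (n+2) → R))).updateCol k
      (M.det • (Pi.single l 1 : Fin (n+2) → R)) := by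
    rw [hB, my_mul_updateColumn, my_mul_updateColumn, mul_one, hmv, hmv]
  have detB : B.det = M.adjugate i j * M.adjugate k l - M.adjugate k j * M.adjugate i l :=
    my_det_one_two_updates i k hik.ne _ _
  have h2 : ((M.updateCol i (M.det • (Pi.single j 1 : Fin (n+2) → R))).updateCol k
      (M.det • (Pi.single l 1 : Fin (n+2) → R))).det
      = M.det * (M.det *
        ((M.updateCol i (Pi.single j 1)).updateCol k (Pi.single l 1)).det) := by
    rw [Matrix.det_updateCol_smul, my_updateColumn_comm _ hik.ne,
      Matrix.det_updateCol_smul, my_updateColumn_comm _ hik.ne.symm]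
  calc M.det * (M.adjugate i j * M.adjugate k l - M.adjugate i l * M.adjugate k j)
      = M.det * B.det := by rw [detB]; ring
    _ = (M * B).det := (Matrix.det_mul M B).symm
    _ = M.det * (M.det *
        ((M.updateCol i (Pi.single j 1)).updateCol k (Pi.single l 1)).det) := by
        rw [hMB, h2]
    _ = M.det * ((-1 : R) ^ ((i : ℕ) + (j : ℕ) + (k : ℕ) + (l : ℕ)) * M.det *
          (M.submatrix r c).det) := by
        rw [my_det_double_update M i k j l i₀ j₀ hki hlj rfl rfl, ← hr', ← hc']
        ring

end JacobiHelpers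

/-- Jacobi's theorem on 2×2 minors of the adjugate matrix: for an `m × m`
matrix `M` (`m ≥ 2`) with adjugate `A = adj M`, rows `i < k` and columns
`j < l`,
`A_{ij}·A_{kl} − A_{il}·A_{kj} = (−1)^{i+j+k+l} · det M · det M(ĵ,l̂ | î,k̂)`,
where `M(ĵ,l̂ | î,k̂)` is obtained from `M` by deleting rows `j, l` and columns
`i, k`, keeping the remaining rows and columns in their natural order (encoded
here by the strictly monotone enumerations `r` of `{x | x ≠ j ∧ x ≠ l}` and `c`
of `{x | x ≠ i ∧ x ≠ k}`). -/
theorem jacobi_adjugate_minor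
    {R : Type*} [CommRing R] (m : ℕ) (hm : 2 ≤ m)
    (M : Matrix (Fin m) (Fin m) R)
    (i k j l : Fin m) (hik : i < k) (hjl : j < l)
    (r c : Fin (m - 2) → Fin m)
    (hr : StrictMono r) (hc : StrictMono c)
    (hrange : Set.range r = {x : Fin m | x ≠ j ∧ x ≠ l})
    (hcrange : Set.range c = {x : Fin m | x ≠ i ∧ x ≠ k}) :
    M.adjugate i j * M.adjugate k l - M.adjugate i l * M.adjugate k j =
      (-1 : R) ^ ((i : ℕ) + (j : ℕ) + (k : ℕ) + (l : ℕ)) * M.det *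
        (M.submatrix r c).det := by
  obtain ⟨n, rfl⟩ : ∃ n, m = n + 2 := ⟨m - 2, by omega⟩
  let A' := Matrix.mvPolynomialX (Fin (n+2)) (Fin (n+2)) ℤ
  have hgen : A'.adjugate i j * A'.adjugate k l - A'.adjugate i l * A'.adjugate k j
      = (-1) ^ ((i : ℕ) + (j : ℕ) + (k : ℕ) + (l : ℕ)) * A'.det
          * (A'.submatrix r c).det :=
    mul_left_cancel₀ (Matrix.det_mvPolynomialX_ne_zero _ ℤ)
      (jacobi_aux A' i k j l hik hjl r c hr hc hrange hcrange)
  set φ := MvPolynomial.aeval (R := ℤ) (fun p : Fin (n+2) × Fin (n+2) => M p.1 p.2) with hφ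
  have hM : φ.mapMatrix A' = M := Matrix.mvPolynomialX_mapMatrix_aeval ℤ M
  have hadjM : φ.mapMatrix A'.adjugate = M.adjugate := by
    rw [AlgHom.map_adjugate, hM]
  have hadj : ∀ a b, φ (A'.adjugate a b) = M.adjugate a b := by
    intro a b
    rw [← hadjM]
    simp [AlgHom.mapMatrix_apply]
  have hdet : φ A'.det = M.det := by
    rw [AlgHom.map_det, hM]
  have hsub : φ (A'.submatrix r c).det = (M.submatrix r c).det := by
    rw [AlgHom.map_det]
    congr 1
    ext a b
    rw [← hM]
    simp [AlgHom.mapMatrix_apply]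
  calc M.adjugate i j * M.adjugate k l - M.adjugate i l * M.adjugate k j
      = φ (A'.adjugate i j * A'.adjugate k l - A'.adjugate i l * A'.adjugate k j) := by
        rw [map_sub, _root_.map_mul, _root_.map_mul, hadj, hadj, hadj, hadj]
    _ = φ ((-1) ^ ((i : ℕ) + (j : ℕ) + (k : ℕ) + (l : ℕ)) * A'.det
          * (A'.submatrix r c).det) := by rw [hgen]
    _ = (-1 : R) ^ ((i : ℕ) + (j : ℕ) + (k : ℕ) + (l : ℕ)) * M.det
          * (M.submatrix r c).det := by
        rw [_root_.map_mul, _root_.map_mul, map_pow, map_neg, _root_.map_one, hdet, hsub]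
end

section
/- Let K be a commutative ring, m a positive integer, and R = K[x_{ab} : 1 ≤ a, b ≤ m] the polynomial ring in m² independent indeterminates. Let X = (x_{ab}) be the generic m×m matrix over R, let A = adj(X) be its adjugate and D = det(X). Then for all indices u, j, v, k in {1, …, m}, the formal partial derivative of the adjugate entry satisfies D · ∂A_{uj}/∂x_{vk} = A_{uj}·A_{kv} − A_{uv}·A_{kj}. (This is the derivative form of Jacobi's identity A_{uj}A_{kv} − A_{uv}A_{kj} = D(−1)^{u+j+k+v}A(uk|vj) underlying the proof of Lemma 4.1.) -/
open MvPolynomial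

/-- The generic `m × m` matrix over the polynomial ring
`K[x_{ab} : 1 ≤ a, b ≤ m]`. -/
noncomputable def genericMatrix (K : Type*) [CommRing K] (m : ℕ) :
    Matrix (Fin m) (Fin m) (MvPolynomial (Fin m × Fin m) K) :=
  Matrix.of fun a b => MvPolynomial.X (a, b)

section Aux

variable {K : Type*} [CommRing K] {σ : Type*} [DecidableEq σ]

/-- Product rule for `pderiv` over a finite product. -/
lemma pderiv_finset_prod {ι : Type*} [DecidableEq ι] (p : σ) (s : Finset ι)
    (f : ι → MvPolynomial σ K) :
    pderiv p (∏ a ∈ s, f a) = ∑ a ∈ s, (∏ b ∈ s.erase a, f b) * pderiv p (f a) := by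
  classical
  induction s using Finset.induction with
  | empty => simp
  | @insert a s ha ih =>
    rw [Finset.prod_insert ha, pderiv_mul, ih, Finset.sum_insert ha, Finset.erase_insert ha,
      Finset.mul_sum]
    congr 1
    · exact mul_comm _ _
    · refine Finset.sum_congr rfl fun b hb => ?_
      rw [Finset.erase_insert_of_ne (by rintro rfl; exact ha hb),
        Finset.prod_insert (fun h => ha (Finset.mem_of_mem_erase h))]
      ring

/-- Derivative of a determinant: the sum of determinants with one row differentiated. -/
lemma pderiv_det {m : ℕ} (p : σ) (M : Matrix (Fin m) (Fin m) (MvPolynomial σ K)) :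
    pderiv p M.det = ∑ r, (M.updateRow r fun c => pderiv p (M r c)).det := by
  classical
  have hconst : ∀ (n : ℤ) (x : MvPolynomial σ K),
      pderiv p ((n : MvPolynomial σ K) * x) = (n : MvPolynomial σ K) * pderiv p x := by
    intro n x
    rw [← zsmul_eq_mul, ← zsmul_eq_mul, map_zsmul]
  have hdet : ∀ r : Fin m, (M.updateRow r fun c => pderiv p (M r c)).det
      = ∑ τ : Equiv.Perm (Fin m), ((Equiv.Perm.sign τ : ℤ) : MvPolynomial σ K) *
          (pderiv p (M r (τ⁻¹ r)) * ∏ b ∈ Finset.univ.erase (τ⁻¹ r), M (τ b) b) := by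
    intro r
    rw [Matrix.det_apply']
    refine Finset.sum_congr rfl fun τ _ => ?_
    congr 1
    rw [← Finset.mul_prod_erase Finset.univ _ (Finset.mem_univ (τ⁻¹ r))]
    congr 1
    · rw [show τ (τ⁻¹ r) = r from τ.apply_symm_apply r, Matrix.updateRow_self]
    · refine Finset.prod_congr rfl fun b hb => ?_
      rw [Matrix.updateRow_ne]
      intro h
      exact (Finset.ne_of_mem_erase hb) (by rw [← h, show τ⁻¹ (τ b) = b from τ.symm_apply_apply b])
  rw [Matrix.det_apply', map_sum]
  simp_rw [hconst, pderiv_finset_prod, Finset.mul_sum, hdet]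
  conv_rhs => rw [Finset.sum_comm]
  refine Finset.sum_congr rfl fun τ _ => ?_
  refine Fintype.sum_equiv τ _ _ fun i => ?_
  rw [show τ⁻¹ (τ i) = i from τ.symm_apply_apply i]
  ring

/-- The partial derivative of the determinant of the generic matrix is an adjugate entry. -/
lemma pderiv_det_generic (K : Type*) [CommRing K] (m : ℕ) (v k : Fin m) :
    pderiv (v, k) (genericMatrix K m).det = (genericMatrix K m).adjugate k v := by
  rw [pderiv_det, Matrix.adjugate_apply]
  rw [Finset.sum_eq_single v]
  · have hfun : (fun c => pderiv (v, k) (genericMatrix K m v c))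
        = (Pi.single k 1 : Fin m → MvPolynomial (Fin m × Fin m) K) := by
      funext c
      show pderiv (v, k) (X (v, c)) = _
      rcases eq_or_ne c k with rfl | hc
      · simp
      · rw [pderiv_X_of_ne (by simpa [Prod.ext_iff] using hc)]
        exact (Pi.single_eq_of_ne (M := fun _ => MvPolynomial (Fin m × Fin m) K) hc 1).symm
    rw [hfun]
  · intro r _ hr
    apply Matrix.det_eq_zero_of_row_eq_zero r
    intro c
    rw [Matrix.updateRow_self]
    exact pderiv_X_of_ne (by simp [Prod.ext_iff, hr])
  · simp

/-- Differentiating `adj(X) · X = det X · 1` entrywise. -/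
lemma pderiv_adjugate_mul (K : Type*) [CommRing K] (m : ℕ) (v k : Fin m) :
    (Matrix.of fun a b => pderiv (v, k) ((genericMatrix K m).adjugate a b)) *
        genericMatrix K m =
      (genericMatrix K m).adjugate k v • (1 : Matrix (Fin m) (Fin m) _) -
        (genericMatrix K m).adjugate * Matrix.single v k 1 := by
  classical
  set X := genericMatrix K m with hX
  refine Matrix.ext fun a c => ?_
  have h := congrArg (fun M : Matrix (Fin m) (Fin m) _ => pderiv (v, k) (M a c))
    (Matrix.adjugate_mul X)
  simp only [Matrix.mul_apply, Matrix.smul_apply, Matrix.one_apply, smul_eq_mul] at h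
  rw [map_sum] at h
  simp_rw [pderiv_mul] at h
  rw [Finset.sum_add_distrib] at h
  have h2 : pderiv (v, k) ((if a = c then 1 else 0 : MvPolynomial (Fin m × Fin m) K)) = 0 := by
    split_ifs <;> simp
  rw [h2, mul_zero, add_zero, hX, pderiv_det_generic, ← hX] at h
  have h3 : ∀ b : Fin m, X.adjugate a b * pderiv (v, k) (X b c)
      = X.adjugate a b * ((Matrix.single v k (1 : MvPolynomial (Fin m × Fin m) K)) b c) := by
    intro b
    congr 1
    show pderiv (v, k) (MvPolynomial.X (b, c)) = _
    rcases eq_or_ne (b, c) (v, k) with he | he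
    · rw [he, pderiv_X_self]
      rw [show b = v from (Prod.ext_iff.1 he).1, show c = k from (Prod.ext_iff.1 he).2]
      simp
    · rw [pderiv_X_of_ne he]
      exact (Matrix.single_apply_of_ne v k 1 b c
        (by rintro ⟨rfl, rfl⟩; exact he rfl)).symm
  simp_rw [h3] at h
  rw [Matrix.mul_apply, Matrix.sub_apply, Matrix.smul_apply, Matrix.one_apply, smul_eq_mul,
    Matrix.mul_apply]
  simp only [Matrix.of_apply]
  linear_combination h

end Aux

/-- The derivative form of Jacobi's identity: for the generic matrix `X` with
adjugate `A = adj X` and determinant `D = det X`, the formal partial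
derivative satisfies `D · ∂A_{uj}/∂x_{vk} = A_{uj}·A_{kv} − A_{uv}·A_{kj}`. -/
theorem det_mul_pderiv_adjugate
    (K : Type*) [CommRing K] (m : ℕ) (hm : 0 < m) (u j v k : Fin m) :
    (genericMatrix K m).det *
        MvPolynomial.pderiv (v, k) ((genericMatrix K m).adjugate u j) =
      (genericMatrix K m).adjugate u j * (genericMatrix K m).adjugate k v -
        (genericMatrix K m).adjugate u v * (genericMatrix K m).adjugate k j := by
  classical
  set X := genericMatrix K m with hX
  set A := X.adjugate with hA
  set A' : Matrix (Fin m) (Fin m) (MvPolynomial (Fin m × Fin m) K) :=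
    Matrix.of fun a b => pderiv (v, k) (A a b) with hA'
  have key : X.det • A' = A k v • A - A * (Matrix.single v k 1 * A) := by
    calc X.det • A' = A' * (X * A) := by
          rw [Matrix.mul_adjugate, Matrix.mul_smul, Matrix.mul_one]
      _ = (A' * X) * A := by rw [Matrix.mul_assoc]
      _ = (A k v • (1 : Matrix (Fin m) (Fin m) _) - A * Matrix.single v k 1) * A := by
          rw [pderiv_adjugate_mul]
      _ = A k v • A - A * (Matrix.single v k 1 * A) := by
          rw [Matrix.sub_mul, Matrix.smul_mul, Matrix.one_mul, Matrix.mul_assoc]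
  have hentry := congrArg (fun M : Matrix (Fin m) (Fin m) _ => M u j) key
  simp only [Matrix.smul_apply, Matrix.sub_apply, smul_eq_mul, hA', Matrix.of_apply] at hentry
  rw [hentry]
  have hse : (A * (Matrix.single v k (1 : MvPolynomial (Fin m × Fin m) K) * A)) u j = A u v * A k j := by
    rw [Matrix.mul_apply, Finset.sum_eq_single v]
    · rw [Matrix.single_mul_apply_same, one_mul]
    · intro b _ hb
      rw [Matrix.single_mul_apply_of_ne (h := hb), mul_zero]
    · simp
  rw [hse]
  ring
end
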